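/- Let G be a finite 2-group of the form E ∗ C₄, where E is extraspecial, |G| = 2|E|, and the central product amalgamates the centre of E with the subgroup of order 2 in C₄. Then G is not filled. -/

import Mathlib

open Pointwise

/-- `S` is product-free if `S ∩ SS = ∅`. -/
def ProductFree {G : Type*} [Group G] (S : Set G) : Prop :=
  Disjoint S (S * S)

/-- `S` is locally maximal product-free if it is product-free and not properly
contained in any product-free set. -/
def LocallyMaximalPF {G : Type*} [Group G] (S : Set G) : Prop :=
  ProductFree S ∧ ∀ T : Set G, ProductFree T → S ⊆ T → S = T

/-- `S` fills `G` (is complete) if every non-identity element lies in `S ∪ SS`. -/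
def Fills {G : Type*} [Group G] (S : Set G) : Prop :=
  ∀ g : G, g ≠ 1 → g ∈ S ∪ S * S

/-- `G` is filled if every locally maximal product-free set fills `G`. -/
def Filled (G : Type*) [Group G] : Prop :=
  ∀ S : Set G, LocallyMaximalPF S → Fills S

/-- A finite 2-group is extraspecial if its centre equals its derived subgroup,
has order 2, and contains all squares (equivalently `Z(G) = [G,G] = Φ(G) ≅ C₂`). -/
def IsExtraspecial (G : Type*) [Group G] : Prop :=
  Subgroup.center G = commutator G ∧ Nat.card (Subgroup.center G) = 2 ∧
    ∀ g : G, g ^ 2 ∈ Subgroup.center G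

theorem central_product_extraspecial_C4_not_filled
    {G : Type*} [Group G] [Finite G] (E : Subgroup G)
    (hE : IsExtraspecial E) (hidx : E.index = 2)
    (hZ : IsCyclic (Subgroup.center G)) (hZ4 : Nat.card (Subgroup.center G) = 4)
    (hEZ : Nat.card (E ⊓ Subgroup.center G : Subgroup G) = 2) :
    ¬ Filled G := by
  intro hFill
  obtain ⟨g, hg⟩ := hZ.exists_generator
  set x : G := (g : G) with hxdef
  have hxc : x ∈ Subgroup.center G := g.2
  have horder : orderOf x = 4 := by
    rw [Subgroup.orderOf_coe, orderOf_eq_card_of_forall_mem_zpowers hg, hZ4]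
  set z : G := x * x with hzdef
  have hx4 : z * z = 1 := by
    have h4 : x ^ 4 = 1 := by rw [← horder]; exact pow_orderOf_eq_one x
    rw [hzdef, ← pow_two x, ← pow_add]
    exact h4
  have hz_ne : z ≠ 1 := by
    intro h
    have h2 : x ^ 2 = 1 := by rw [pow_two, ← hzdef, h]
    have := orderOf_dvd_of_pow_eq_one h2
    rw [horder] at this
    omega
  -- unique involution in the centre
  have hinv : ∀ w ∈ Subgroup.center G, w * w = 1 → w = 1 ∨ w = z := by
    intro w hw hww
    obtain ⟨k, hk⟩ := Subgroup.mem_zpowers_iff.mp (hg ⟨w, hw⟩)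
    have hkx : x ^ k = w := by
      have := congrArg (Subtype.val) hk
      simpa [hxdef] using this
    have h2k : x ^ (2 * k) = 1 := by
      rw [two_mul, zpow_add, hkx, hww]
    have hdvd : (4 : ℤ) ∣ 2 * k := by
      have := orderOf_dvd_iff_zpow_eq_one.mpr h2k
      rwa [horder] at this
    obtain ⟨m, hm⟩ : (2 : ℤ) ∣ k := ⟨(2 * k) / 4, by omega⟩
    have hwzm : w = z ^ m := by
      rw [← hkx, hm, zpow_mul, zpow_two, ← hzdef]
    have hz2 : z ^ (2 : ℤ) = 1 := by rw [zpow_two, hx4]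
    rcases Int.even_or_odd m with ⟨j, hj⟩ | ⟨j, hj⟩
    · left
      rw [hwzm, hj, show j + j = 2 * j by ring, zpow_mul, hz2, one_zpow]
    · right
      rw [hwzm, hj, zpow_add, zpow_one, zpow_mul, hz2, one_zpow, one_mul]
  -- z lies in E ⊓ center
  have hzEZ : z ∈ E ⊓ Subgroup.center G := by
    have : Nontrivial (E ⊓ Subgroup.center G : Subgroup G) := by
      rw [← Finite.one_lt_card_iff_nontrivial, hEZ]; omega
    obtain ⟨h, hh1⟩ := exists_ne (1 : (E ⊓ Subgroup.center G : Subgroup G))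
    have hdvd : orderOf h ∣ 2 := by rw [← hEZ]; exact orderOf_dvd_natCard h
    have hsq : h * h = 1 := by
      have := orderOf_dvd_iff_pow_eq_one.mp hdvd
      rwa [pow_two] at this
    have hwc : (h : G) ∈ Subgroup.center G := h.2.2
    have hww : (h : G) * (h : G) = 1 := by
      have := congrArg (Subtype.val) hsq
      simpa using this
    rcases hinv (h : G) hwc hww with h1 | hz
    · exact absurd (Subtype.ext h1) hh1
    · rw [← hz]; exact h.2
  -- every element of E ⊓ center is 1 or z
  have hH : ∀ w ∈ E ⊓ Subgroup.center G, w = 1 ∨ w = z := by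
    intro w hw
    have hdvd : orderOf w ∣ 2 := by
      rw [← hEZ]; exact Subgroup.orderOf_dvd_natCard _ hw
    have hww : w * w = 1 := by
      have := orderOf_dvd_iff_pow_eq_one.mp hdvd
      rwa [pow_two] at this
    exact hinv w hw.2 hww
  -- squares of elements of E
  have hEsq : ∀ e ∈ E, e * e = 1 ∨ e * e = z := by
    have hDle : (E ⊓ Subgroup.center G).subgroupOf E ≤ Subgroup.center E := by
      intro a ha
      rw [Subgroup.mem_subgroupOf] at ha
      rw [Subgroup.mem_center_iff]
      intro b
      exact Subtype.ext (Subgroup.mem_center_iff.mp ha.2 (b : G))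
    have hcardD : Nat.card ((E ⊓ Subgroup.center G).subgroupOf E) = 2 := by
      rw [Nat.card_congr (Subgroup.subgroupOfEquivOfLe inf_le_left).toEquiv]
      exact hEZ
    have hDeq : (E ⊓ Subgroup.center G).subgroupOf E = Subgroup.center E := by
      apply SetLike.coe_injective
      refine Set.eq_of_subset_of_ncard_le hDle ?_ (Set.toFinite _)
      rw [← Nat.card_coe_set_eq, ← Nat.card_coe_set_eq]
      have e1 : Nat.card ((Subgroup.center E : Set E) : Type _) = 2 := hE.2.1
      have e2 : Nat.card ((((E ⊓ Subgroup.center G).subgroupOf E : Subgroup E) : Set E) : Type _) = 2 := hcardD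
      rw [e1, e2]
    intro e he
    have hsq := hE.2.2 ⟨e, he⟩
    rw [← hDeq, Subgroup.mem_subgroupOf] at hsq
    have : e * e ∈ E ⊓ Subgroup.center G := by
      have hcoe : ((⟨e, he⟩ ^ 2 : E) : G) = e * e := by push_cast; rw [pow_two]
      rwa [hcoe] at hsq
    exact hH _ this
  have hxcomm : ∀ b : G, b * x = x * b := Subgroup.mem_center_iff.mp hxc
  -- x is not in E
  have hxE : x ∉ E := by
    intro hxe
    rcases hH x ⟨hxe, hxc⟩ with h1 | hz
    · exact hz_ne (by rw [hzdef, h1, one_mul])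
    · refine hz_ne ?_
      calc z = x * x := hzdef
      _ = z * z := by rw [hz]
      _ = 1 := hx4
  -- squares of all elements of G
  have hsq_all : ∀ a : G, a * a = 1 ∨ a * a = z := by
    intro a
    by_cases ha : a ∈ E
    · exact hEsq a ha
    · have hxinv : x⁻¹ ∉ E := fun h => hxE ((inv_mem_iff (x := x)).mp h)
      have he : x⁻¹ * a ∈ E :=
        (Subgroup.mul_mem_iff_of_index_two hidx).mpr (iff_of_false hxinv ha)
      have hae : a = x * (x⁻¹ * a) := by group
      have key : a * a = z * ((x⁻¹ * a) * (x⁻¹ * a)) := by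
        set e := x⁻¹ * a with hedef
        calc a * a = (x * e) * (x * e) := by rw [← hae]
        _ = x * (e * x) * e := by group
        _ = x * (x * e) * e := by rw [hxcomm e]
        _ = (x * x) * (e * e) := by group
        _ = z * (e * e) := by rw [hzdef]
      rcases hEsq _ he with h1 | hz
      · right; rw [key, h1, mul_one]
      · left; rw [key, hz, hx4]
  -- build a locally maximal product-free set containing z
  have hPFz : ProductFree ({z} : Set G) := by
    have hmul : ({z} : Set G) * {z} = {1} := by
      rw [Set.singleton_mul_singleton, hx4]
    rw [ProductFree, hmul, Set.disjoint_singleton_left]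
    simpa using hz_ne
  obtain ⟨S, hSC, hSmax⟩ := Set.Finite.exists_maximalFor (id : Set G → Set G)
    {T : Set G | ProductFree T ∧ z ∈ T} (Set.toFinite _) ⟨{z}, hPFz, rfl⟩
  obtain ⟨hSpf, hzS⟩ := hSC
  have hLM : LocallyMaximalPF S := ⟨hSpf, fun T hT hST => Set.Subset.antisymm hST (hSmax ⟨hT, hST hzS⟩ hST)⟩
  have hx1 : x ≠ 1 := by
    intro h
    exact hz_ne (by rw [hzdef, h, one_mul])
  rcases hFill S hLM x hx1 with hxS | hxSS
  · exact Set.disjoint_left.mp hSpf hzS (hzdef ▸ Set.mul_mem_mul hxS hxS)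
  · obtain ⟨s, hs, t, ht, hst⟩ := Set.mem_mul.mp hxSS
    have hs2 : s * s = 1 := by
      rcases hsq_all s with h1 | hz
      · exact h1
      · exact absurd (hz ▸ Set.mul_mem_mul hs hs) (Set.disjoint_left.mp hSpf hzS)
    have ht2 : t * t = 1 := by
      rcases hsq_all t with h1 | hz
      · exact h1
      · exact absurd (hz ▸ Set.mul_mem_mul ht ht) (Set.disjoint_left.mp hSpf hzS)
    have hsinv : s⁻¹ = s := inv_eq_of_mul_eq_one_right hs2
    have hts : t = s * x := by
      rw [← hst, ← mul_assoc, hs2, one_mul]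
    have htz : t * t = z := by
      calc t * t = s * (x * s) * x := by rw [hts]; group
      _ = s * (s * x) * x := by rw [hxcomm s]
      _ = (s * s) * (x * x) := by group
      _ = z := by rw [hs2, one_mul, hzdef]
    exact hz_ne (by rw [← htz, ht2])
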